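/- Let S be a family of subsets of X = {a₁,…,aₙ} and let φ_w be the rising function of S with respect to the word w = a₁a₂…aₙ, with iterates φ_i. If there are two different elements z, z' ∈ S such that φ_i(z) = φ_i(z') ∪ {a_{i+1}}, then a_{i+1} ∈ z \ φ_w(z'). -/

import Mathlib

open Finset

variable {α : Type*} [DecidableEq α]

/-- A family is union-closed if it is closed under pairwise unions. -/
def UnionClosed (F : Finset (Finset α)) : Prop := ∀ f ∈ F, ∀ g ∈ F, f ∪ g ∈ F

/-- One rising step: φ_{S,a}(z) = z ∪ {a} if z ∪ {a} ∉ S, and z otherwise. -/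
def riseStep (S : Finset (Finset α)) (a : α) (z : Finset α) : Finset α :=
  if insert a z ∈ S then z else insert a z

/-- Iterated rising function along a word (list of letters): at each step the
current family is replaced by its image and the next letter is risen. -/
def riseWord (S : Finset (Finset α)) : List α → Finset α → Finset α
  | [], z => z
  | a :: u, z => riseWord (S.image (riseStep S a)) u (riseStep S a z)

/-- The section of a family along (a prefix of) a word. -/
def riseSections (S : Finset (Finset α)) : List α → Finset (Finset α)
  | [] => S
  | a :: u => riseSections (S.image (riseStep S a)) u

lemma riseStep_inj (S : Finset (Finset α)) (a : α) {z z' : Finset α}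
    (hz : z ∈ S) (hz' : z' ∈ S) (h : riseStep S a z = riseStep S a z') : z = z' := by
  unfold riseStep at h
  split_ifs at h with h1 h2 h2
  · exact h
  · exact absurd (by rw [h, Finset.insert_idem] at h1; exact h1) h2
  · exact absurd (by rw [← h, Finset.insert_idem] at h2; exact h2) h1
  · have ha : a ∉ z := fun haz => h1 (by rwa [Finset.insert_eq_self.mpr haz])
    have ha' : a ∉ z' := fun haz => h2 (by rwa [Finset.insert_eq_self.mpr haz])
    calc z = (insert a z).erase a := (Finset.erase_insert ha).symm
    _ = (insert a z').erase a := by rw [h]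
    _ = z' := Finset.erase_insert ha'

lemma riseWord_mem (u : List α) : ∀ (S : Finset (Finset α)) z, z ∈ S →
    riseWord S u z ∈ riseSections S u := by
  induction u with
  | nil => intro S z hz; exact hz
  | cons a u ih =>
    intro S z hz
    exact ih _ _ (Finset.mem_image_of_mem _ hz)

lemma riseWord_inj (u : List α) : ∀ (S : Finset (Finset α)) z z', z ∈ S → z' ∈ S →
    riseWord S u z = riseWord S u z' → z = z' := by
  induction u with
  | nil => intro _ _ _ _ _ h; exact h
  | cons a u ih =>
    intro S z z' hz hz' h
    exact riseStep_inj S a hz hz'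
      (ih _ _ _ (Finset.mem_image_of_mem _ hz) (Finset.mem_image_of_mem _ hz') h)

lemma riseStep_subset (S : Finset (Finset α)) (a : α) (z : Finset α) :
    riseStep S a z ⊆ insert a z := by
  unfold riseStep; split_ifs
  · exact Finset.subset_insert _ _
  · exact Finset.Subset.refl _

lemma riseWord_subset (u : List α) : ∀ (S : Finset (Finset α)) z,
    riseWord S u z ⊆ z ∪ u.toFinset := by
  induction u with
  | nil => intro S z; simp [riseWord]
  | cons a u ih =>
    intro S z
    calc riseWord S (a :: u) z = riseWord (S.image (riseStep S a)) u (riseStep S a z) := rfl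
    _ ⊆ riseStep S a z ∪ u.toFinset := ih _ _
    _ ⊆ insert a z ∪ u.toFinset :=
        Finset.union_subset_union (riseStep_subset S a z) (Finset.Subset.refl _)
    _ = z ∪ (a :: u).toFinset := by
        rw [List.toFinset_cons, Finset.insert_union, Finset.union_insert]

lemma riseWord_append (u : List α) : ∀ (v : List α) (S : Finset (Finset α)) z,
    riseWord S (u ++ v) z = riseWord (riseSections S u) v (riseWord S u z) := by
  induction u with
  | nil => intros; rfl
  | cons a u ih => intro v S z; exact ih v _ _

/-- Lemma 3.1 (matching property): if φ_i(z) = φ_i(z') ∪ {a_{i+1}} for two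
different elements z, z' of the family S, then a_{i+1} ∈ z \ φ_w(z'). -/
theorem stmt_0 {α : Type*} [DecidableEq α] [Fintype α]
    (S : Finset (Finset α)) (w : List α) (hnd : w.Nodup) (hall : ∀ x : α, x ∈ w)
    (i : ℕ) (hi : i < w.length)
    (z z' : Finset α) (hz : z ∈ S) (hz' : z' ∈ S) (hne : z ≠ z')
    (heq : riseWord S (w.take i) z =
      insert (w.get ⟨i, hi⟩) (riseWord S (w.take i) z')) :
    w.get ⟨i, hi⟩ ∈ z ∧ w.get ⟨i, hi⟩ ∉ riseWord S w z' := by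
  set a := w.get ⟨i, hi⟩ with ha_def
  set u := w.take i with hu_def
  set v := w.drop (i + 1) with hv_def
  have hw : w = u ++ a :: v := by
    rw [hu_def, hv_def, ha_def]
    rw [List.get_eq_getElem]
    rw [← List.drop_eq_getElem_cons hi, List.take_append_drop]
  have hnd' : (u ++ a :: v).Nodup := hw ▸ hnd
  rw [List.nodup_append] at hnd'
  obtain ⟨hndu, hndav, hdisj⟩ := hnd'
  have hau : a ∉ u := fun h => hdisj a h a List.mem_cons_self rfl
  have hav : a ∉ v := (List.nodup_cons.mp hndav).1
  have haz : a ∈ z := by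
    have := riseWord_subset u S z (heq ▸ Finset.mem_insert_self a _)
    rcases Finset.mem_union.mp this with h | h
    · exact h
    · exact absurd (List.mem_toFinset.mp h) hau
  refine ⟨haz, fun hafin => ?_⟩
  set T := riseSections S u with hT
  set y := riseWord S u z' with hy
  have hay : a ∉ y := by
    intro hay
    apply hne
    refine riseWord_inj u S z z' hz hz' ?_
    rw [heq, ← hy, Finset.insert_eq_self.mpr hay]
  have hstep : riseStep T a y = y := by
    unfold riseStep
    rw [if_pos]
    rw [← heq]
    exact riseWord_mem u S z hz
  rw [hw, riseWord_append u (a :: v) S z'] at hafin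
  have : riseWord T (a :: v) y = riseWord (T.image (riseStep T a)) v y := by
    show riseWord (T.image (riseStep T a)) v (riseStep T a y) = _
    rw [hstep]
  rw [this] at hafin
  have := riseWord_subset v _ y hafin
  rcases Finset.mem_union.mp this with h | h
  · exact hay h
  · exact hav (List.mem_toFinset.mp h)
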